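/- arXiv:1603.08472 — 5 statements merged into one kernel-verified Lean document; each statement's English description precedes it below -/
import Mathlib

section
/- Let m ≥ 2 and let K be a simplicial complex on [m] (a downward closed family of subsets of [m]). Then K is minimally 2-unavoidable — that is, K is 2-unavoidable and no proper downward closed subfamily L ⊊ K is 2-unavoidable — if and only if K is self-dual, i.e., for every subset A ⊆ [m], A ∈ K if and only if the complement [m]∖A is not in K. -/
/-- Key lemma: if K is minimally 2-unavoidable, no nonempty B has both B and Bᶜ in K. -/
lemma stmt2_key (m : ℕ) (K : Set (Finset (Fin m)))
    (hK : ∀ A B : Finset (Fin m), A ∈ K → B ⊆ A → B ∈ K)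
    (hun : ∀ A₁ A₂ : Finset (Fin m), A₁.Nonempty → A₂.Nonempty → Disjoint A₁ A₂ →
        A₁ ∈ K ∨ A₂ ∈ K)
    (hmin : ∀ L : Set (Finset (Fin m)), (∀ A B : Finset (Fin m), A ∈ L → B ⊆ A → B ∈ L) →
        L ⊆ K → L ≠ K →
        ¬ (∀ A₁ A₂ : Finset (Fin m), A₁.Nonempty → A₂.Nonempty → Disjoint A₁ A₂ →
            A₁ ∈ L ∨ A₂ ∈ L))
    (B : Finset (Fin m)) (hBne : B.Nonempty) (hB : B ∈ K) (hBc : Bᶜ ∈ K) : False := by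
  set L : Set (Finset (Fin m)) := {C | C ∈ K ∧ ¬ B ⊆ C} with hLdef
  refine hmin L ?_ ?_ ?_ ?_
  · rintro A C ⟨hAK, hnB⟩ hsub
    exact ⟨hK _ _ hAK hsub, fun h => hnB (h.trans hsub)⟩
  · intro A hA; exact hA.1
  · intro h
    have : B ∈ L := h ▸ hB
    exact this.2 (le_refl B)
  · intro A₁ A₂ h1 h2 hd
    have hsub₁ : ∀ {X Y : Finset (Fin m)}, Disjoint X Y → B ⊆ X → Y ⊆ Bᶜ := by
      intro X Y hdXY hBX y hy
      simp only [Finset.mem_compl]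
      intro hyB
      exact (Finset.disjoint_left.mp hdXY) (hBX hyB) hy
    have hnot : ∀ {X Y : Finset (Fin m)}, Disjoint X Y → B ⊆ X → ¬ B ⊆ Y := by
      intro X Y hdXY hBX hBY
      obtain ⟨x, hx⟩ := hBne
      exact (Finset.disjoint_left.mp hdXY) (hBX hx) (hBY hx)
    rcases hun A₁ A₂ h1 h2 hd with h | h
    · by_cases hBsub : B ⊆ A₁
      · exact Or.inr ⟨hK _ _ hBc (hsub₁ hd hBsub), hnot hd hBsub⟩
      · exact Or.inl ⟨h, hBsub⟩
    · by_cases hBsub : B ⊆ A₂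
      · exact Or.inl ⟨hK _ _ hBc (hsub₁ hd.symm hBsub), hnot hd.symm hBsub⟩
      · exact Or.inr ⟨h, hBsub⟩

/-- For `m ≥ 2` and a simplicial complex `K` on `[m]` (downward closed),
`K` is minimally 2-unavoidable (2-unavoidable, and no proper downward closed
subfamily of `K` is 2-unavoidable) iff `K` is self-dual
(`A ∈ K ↔ [m] \ A ∉ K` for every `A`). -/
theorem stmt2 (m : ℕ) (hm : 2 ≤ m) (K : Set (Finset (Fin m)))
    (hK : ∀ A B : Finset (Fin m), A ∈ K → B ⊆ A → B ∈ K) :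
    ((∀ A₁ A₂ : Finset (Fin m), A₁.Nonempty → A₂.Nonempty → Disjoint A₁ A₂ →
        A₁ ∈ K ∨ A₂ ∈ K) ∧
      ∀ L : Set (Finset (Fin m)), (∀ A B : Finset (Fin m), A ∈ L → B ⊆ A → B ∈ L) →
        L ⊆ K → L ≠ K →
        ¬ (∀ A₁ A₂ : Finset (Fin m), A₁.Nonempty → A₂.Nonempty → Disjoint A₁ A₂ →
            A₁ ∈ L ∨ A₂ ∈ L)) ↔
    (∀ A : Finset (Fin m), A ∈ K ↔ Aᶜ ∉ K) := by
  set i0 : Fin m := ⟨0, by omega⟩ with hi0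
  set i1 : Fin m := ⟨1, by omega⟩ with hi1
  have hne01 : i0 ≠ i1 := by simp [hi0, hi1, Fin.ext_iff]
  have hdisj01 : Disjoint ({i0} : Finset (Fin m)) {i1} := by
    simp [Finset.disjoint_singleton, hne01, hne01.symm]
  constructor
  · rintro ⟨hun, hmin⟩
    have hEmpK : (∅ : Finset (Fin m)) ∈ K := by
      rcases hun {i0} {i1} (Finset.singleton_nonempty _) (Finset.singleton_nonempty _)
        hdisj01 with h | h
      · exact hK _ _ h (Finset.empty_subset _)
      · exact hK _ _ h (Finset.empty_subset _)
    intro A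
    constructor
    · intro hA hAc
      rcases A.eq_empty_or_nonempty with rfl | hAne
      · have hu : (Finset.univ : Finset (Fin m)) ∈ K := by
          simpa using hAc
        exact stmt2_key m K hK hun hmin {i0} (Finset.singleton_nonempty _)
          (hK _ _ hu (Finset.subset_univ _)) (hK _ _ hu (Finset.subset_univ _))
      · exact stmt2_key m K hK hun hmin A hAne hA hAc
    · intro hAc
      by_contra hA
      rcases (Aᶜ).eq_empty_or_nonempty with hce | hcne
      · exact hAc (hce ▸ hEmpK)
      · have hAne : A.Nonempty := by
          rcases A.eq_empty_or_nonempty with rfl | h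
          · exact absurd hEmpK hA
          · exact h
        rcases hun A Aᶜ hAne hcne disjoint_compl_right with h | h
        · exact hA h
        · exact hAc h
  · intro hsd
    constructor
    · intro A₁ A₂ h1 h2 hd
      by_cases hA1 : A₁ ∈ K
      · exact Or.inl hA1
      · have hc : A₁ᶜ ∈ K := not_not.mp (fun h => hA1 ((hsd A₁).mpr h))
        refine Or.inr (hK _ _ hc ?_)
        intro x hx
        simp only [Finset.mem_compl]
        exact fun hx1 => (Finset.disjoint_left.mp hd) hx1 hx
    · intro L hL hLsub hLne hLun
      obtain ⟨A, hAK, hAL⟩ := Set.exists_of_ssubset (HasSubset.Subset.ssubset_of_ne hLsub hLne)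
      have hEmpL : (∅ : Finset (Fin m)) ∈ L := by
        rcases hLun {i0} {i1} (Finset.singleton_nonempty _) (Finset.singleton_nonempty _)
          hdisj01 with h | h
        · exact hL _ _ h (Finset.empty_subset _)
        · exact hL _ _ h (Finset.empty_subset _)
      have hAne : A.Nonempty := by
        rcases A.eq_empty_or_nonempty with rfl | h
        · exact absurd hEmpL hAL
        · exact h
      have hAcK : Aᶜ ∉ K := (hsd A).mp hAK
      have hcne : (Aᶜ).Nonempty := by
        rcases (Aᶜ).eq_empty_or_nonempty with hce | h
        · exact absurd (hce ▸ hK _ _ hAK (Finset.empty_subset _)) hAcK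
        · exact h
      rcases hLun A Aᶜ hAne hcne disjoint_compl_right with h | h
      · exact hAL h
      · exact hAcK (hLsub h)
end

section
/- Let ν be a positive superadditive measure on [m] with ν([m]) = α, and let β be a real number with 0 < β ≤ α. Set r = ⌈α/β⌉. Then the sub-level complex K_{ν ≤ β} = {A ⊆ [m] : ν(A) ≤ β} is r-unavoidable; in other words, the partition number satisfies π(K_{ν ≤ β}) ≤ ⌈α/β⌉, i.e., for all pairwise disjoint nonempty subsets A_1,…,A_r of [m], at least one A_i satisfies ν(A_i) ≤ β. -/
lemma sum_le_sup {m : ℕ} {ι : Type*} [DecidableEq ι] (ν : Finset (Fin m) → ℝ)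
    (h0 : ν ∅ = 0)
    (hsuper : ∀ A B : Finset (Fin m), Disjoint A B → ν A + ν B ≤ ν (A ∪ B))
    (A : ι → Finset (Fin m))
    (hdis : ∀ i j, i ≠ j → Disjoint (A i) (A j)) (s : Finset ι) :
    ∑ i ∈ s, ν (A i) ≤ ν (s.sup A) := by
  classical
  induction s using Finset.induction_on with
  | empty => simp [h0]
  | @insert a s hx ih =>
    rw [Finset.sum_insert hx, Finset.sup_insert]
    have hd : Disjoint (A a) (s.sup A) := by
      rw [Finset.disjoint_sup_right]
      intro i hi
      exact hdis a i (fun h => hx (h ▸ hi))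
    calc ν (A a) + ∑ i ∈ s, ν (A i) ≤ ν (A a) + ν (s.sup A) := by linarith
      _ ≤ ν (A a ∪ s.sup A) := hsuper _ _ hd
      _ = ν (A a ⊔ s.sup A) := rfl

/-- If `ν` is a positive superadditive measure on `[m]` with
`ν([m]) = α` and `0 < β ≤ α`, then with `r = ⌈α/β⌉` the sub-level complex
`K_{ν ≤ β}` is `r`-unavoidable, i.e. `π(K_{ν ≤ β}) ≤ ⌈α/β⌉`: for all pairwise
disjoint nonempty `A_1, …, A_r ⊆ [m]` some `A_i` satisfies `ν(A_i) ≤ β`. -/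
theorem stmt5 (m : ℕ) (ν : Finset (Fin m) → ℝ)
    (h0 : ν ∅ = 0) (hpos : 0 < ν Finset.univ) (hnn : ∀ A, 0 ≤ ν A)
    (hmono : ∀ A B : Finset (Fin m), A ⊆ B → ν A ≤ ν B)
    (hsuper : ∀ A B : Finset (Fin m), Disjoint A B → ν A + ν B ≤ ν (A ∪ B))
    (α : ℝ) (hα : α = ν Finset.univ)
    (β : ℝ) (hβ : 0 < β) (hβα : β ≤ α)
    (A : Fin ⌈α / β⌉₊ → Finset (Fin m)) (hne : ∀ i, (A i).Nonempty)
    (hdis : ∀ i j, i ≠ j → Disjoint (A i) (A j)) :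
    ∃ i, ν (A i) ≤ β := by
  by_contra h
  push_neg at h
  have hα0 : 0 < α := lt_of_lt_of_le hβ hβα
  have hr1 : 1 ≤ ⌈α / β⌉₊ := Nat.one_le_ceil_iff.mpr (by positivity)
  have hcard : (Finset.univ : Finset (Fin ⌈α / β⌉₊)).card = ⌈α / β⌉₊ := by simp
  have hsum : (⌈α / β⌉₊ : ℝ) * β < ∑ i : Fin ⌈α / β⌉₊, ν (A i) := by
    calc (⌈α / β⌉₊ : ℝ) * β = ∑ _i : Fin ⌈α / β⌉₊, β := by simp [mul_comm]
      _ < ∑ i : Fin ⌈α / β⌉₊, ν (A i) := by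
          apply Finset.sum_lt_sum_of_nonempty
          · simp [Finset.univ_nonempty_iff]
            exact Fin.pos_iff_nonempty.mp (by omega)
          · intro i _; exact h i
  have hle : ∑ i : Fin ⌈α / β⌉₊, ν (A i) ≤ ν ((Finset.univ : Finset (Fin ⌈α / β⌉₊)).sup A) :=
    sum_le_sup ν h0 hsuper A hdis _
  have hmon : ν ((Finset.univ : Finset (Fin ⌈α / β⌉₊)).sup A) ≤ ν Finset.univ :=
    hmono _ _ (Finset.subset_univ _)
  have hrβ : α ≤ (⌈α / β⌉₊ : ℝ) * β := by
    have := Nat.le_ceil (α / β)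
    calc α = (α / β) * β := by field_simp
      _ ≤ (⌈α / β⌉₊ : ℝ) * β := by
          apply mul_le_mul_of_nonneg_right _ hβ.le
          exact_mod_cast this
  linarith
end

section
/- Let μ_1,…,μ_n (n ≥ 1) be nonnegative weight vectors on [m], inducing additive measures μ_t(A) = Σ_{i∈A} μ_t(i), and suppose there is c > 0 with μ_t([m]) ≥ c for every t. Let ν(A) = min_{1≤t≤n} μ_t(A) be the associated geometric superadditive measure and α = ν([m]). Then for every integer r ≥ 2 there exists a probability measure μ on [m] (nonnegative weights summing to 1) such that K_{μ ≤ 1/r} ⊆ K_{ν ≤ α/r}; that is, every A ⊆ [m] with μ(A) ≤ 1/r satisfies ν(A) ≤ α/r. -/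
/-- Let `μ_1, …, μ_n` (`n ≥ 1`, here indexed by `Fin (n+1)`) be
nonnegative weight vectors on `[m]` with `μ_t([m]) ≥ c > 0` for all `t`, let
`ν(A) = min_t μ_t(A)` be the associated geometric superadditive measure and
`α = ν([m])`.  Then for every `r ≥ 2` there is a probability measure `μ` on `[m]`
with `K_{μ ≤ 1/r} ⊆ K_{ν ≤ α/r}`. -/
theorem stmt6 (m n : ℕ) (μ : Fin (n + 1) → Fin m → ℝ)
    (hnn : ∀ t i, 0 ≤ μ t i) (c : ℝ) (hc : 0 < c)
    (hbound : ∀ t, c ≤ ∑ i, μ t i) (r : ℕ) (hr : 2 ≤ r) :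
    letI ν : Finset (Fin m) → ℝ := fun A => ⨅ t, ∑ i ∈ A, μ t i
    ∃ w : Fin m → ℝ, (∀ i, 0 ≤ w i) ∧ (∑ i, w i) = 1 ∧
      ∀ A : Finset (Fin m), (∑ i ∈ A, w i) ≤ 1 / (r : ℝ) →
        ν A ≤ ν Finset.univ / (r : ℝ) := by
  obtain ⟨t₀, ht₀⟩ := Finite.exists_min (fun t => ∑ i, μ t i)
  set S := ∑ i, μ t₀ i with hSdef
  have hS : 0 < S := hc.trans_le (hbound t₀)
  have hr0 : (0 : ℝ) < (r : ℝ) := by positivity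
  have hνuniv : (⨅ t, ∑ i ∈ Finset.univ, μ t i) = S := by
    apply le_antisymm
    · exact ciInf_le (Set.Finite.bddBelow (Set.finite_range _)) t₀
    · exact le_ciInf ht₀
  refine ⟨fun i => μ t₀ i / S, fun i => div_nonneg (hnn t₀ i) hS.le, ?_, ?_⟩
  · rw [← Finset.sum_div, div_eq_one_iff_eq hS.ne']
  · intro A hA
    rw [← Finset.sum_div, div_le_div_iff₀ hS hr0, one_mul] at hA
    have h1 : (⨅ t, ∑ i ∈ A, μ t i) ≤ ∑ i ∈ A, μ t₀ i :=
      ciInf_le (Set.Finite.bddBelow (Set.finite_range _)) t₀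
    show (⨅ t, ∑ i ∈ A, μ t i) ≤ (⨅ t, ∑ i ∈ Finset.univ, μ t i) / (r : ℝ)
    rw [hνuniv]
    calc (⨅ t, ∑ i ∈ A, μ t i) ≤ ∑ i ∈ A, μ t₀ i := h1
    _ ≤ S / r := by rw [le_div_iff₀ hr0]; linarith
end

section
/- Let K be a self-dual simplicial complex on [m]: K is downward closed and for every A ⊆ [m], A ∈ K if and only if [m]∖A ∉ K. Define ω : 2^[m] → {0,1} by ω(A) = 0 if A ∈ K and ω(A) = 1 if A ∉ K, and let ν_ω be the associated superadditive measure (taking F = 2^[m] as the hypergraph). Then ν_ω(A) = ω(A) for every A ⊆ [m], ν_ω([m]) = 1, and K = K_{ν_ω ≤ 1/2} = {A ⊆ [m] : ν_ω(A) ≤ 1/2}. In particular, every self-dual complex is WH-realizable. -/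
/-- The superadditive measure `ν_ω` associated to a hypergraph `F ⊆ 2^[m]` and a
weight distribution `ω` on `F`: `ν_ω(A)` is the supremum of `ω(A_1) + … + ω(A_k)`
over all (possibly empty) subfamilies `{A_1, …, A_k} ⊆ F` of pairwise disjoint sets
with `A_1 ∪ … ∪ A_k ⊆ A`. -/
noncomputable def nuOmega {m : ℕ} (F : Set (Finset (Fin m)))
    (ω : Finset (Fin m) → ℝ) (A : Finset (Fin m)) : ℝ :=
  sSup {s : ℝ | ∃ P : Finset (Finset (Fin m)), ↑P ⊆ F ∧
    (∀ B ∈ P, ∀ C ∈ P, B ≠ C → Disjoint B C) ∧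
    (∀ B ∈ P, B ⊆ A) ∧ s = ∑ B ∈ P, ω B}

/-- Let `K` be a self-dual simplicial complex on `[m]` and let
`ω(A) = 0` for `A ∈ K`, `ω(A) = 1` for `A ∉ K`.  With the full hypergraph
`F = 2^[m]`, the associated superadditive measure satisfies `ν_ω = ω`,
`ν_ω([m]) = 1`, and `K = K_{ν_ω ≤ 1/2}`.  Hence every self-dual complex is
WH-realizable. -/
theorem stmt8 (m : ℕ) (K : Set (Finset (Fin m)))
    (hdc : ∀ A B : Finset (Fin m), A ∈ K → B ⊆ A → B ∈ K)
    (hsd : ∀ A : Finset (Fin m), A ∈ K ↔ Aᶜ ∉ K)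
    (ω : Finset (Fin m) → ℝ)
    (hω0 : ∀ A, A ∈ K → ω A = 0) (hω1 : ∀ A, A ∉ K → ω A = 1) :
    (∀ A : Finset (Fin m), nuOmega Set.univ ω A = ω A) ∧
    nuOmega Set.univ ω Finset.univ = 1 ∧
    K = {A : Finset (Fin m) | nuOmega Set.univ ω A ≤ 1 / 2} := by
  classical
  have hempty : (∅ : Finset (Fin m)) ∈ K := by
    by_contra h
    have huniv : (Finset.univ : Finset (Fin m)) ∈ K := by
      have := (hsd ∅).not_left.mp h  -- maybe wrong; adjust
      simpa using this
    exact h (hdc _ _ huniv (Finset.empty_subset _))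
  have huniv : (Finset.univ : Finset (Fin m)) ∉ K := by
    have := (hsd Finset.univ)
    intro h
    have : (Finset.univ : Finset (Fin m))ᶜ ∉ K := (hsd _).mp h
    simp at this
    exact this hempty
  -- ω nonneg
  have hωnn : ∀ A, 0 ≤ ω A := by
    intro A
    by_cases hA : A ∈ K
    · rw [hω0 A hA]
    · rw [hω1 A hA]; norm_num
  -- key bound
  have hbound : ∀ A : Finset (Fin m), ∀ P : Finset (Finset (Fin m)),
      (∀ B ∈ P, ∀ C ∈ P, B ≠ C → Disjoint B C) → (∀ B ∈ P, B ⊆ A) →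
      (∑ B ∈ P, ω B) ≤ ω A := by
    intro A P hdisj hsub
    by_cases hA : A ∈ K
    · have : ∀ B ∈ P, ω B = 0 := fun B hB => hω0 B (hdc A B hA (hsub B hB))
      rw [Finset.sum_eq_zero this, hω0 A hA]
    · rw [hω1 A hA]
      -- at most one B ∈ P with B ∉ K
      have hcard : (P.filter (fun B => B ∉ K)).card ≤ 1 := by
        rw [Finset.card_le_one]
        intro B hB C hC
        simp only [Finset.mem_filter] at hB hC
        by_contra hne
        have hd := hdisj B hB.1 C hC.1 hne
        have hCc : Cᶜ ∈ K := by
          by_contra h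
          exact hC.2 ((hsd C).mpr h)
        have hBsub : B ⊆ Cᶜ := by
          intro x hx
          simp only [Finset.mem_compl]
          exact fun hxC => (Finset.disjoint_left.mp hd hx) hxC
        exact hB.2 (hdc _ _ hCc hBsub)
      calc ∑ B ∈ P, ω B = ∑ B ∈ P.filter (fun B => B ∉ K), ω B := by
            rw [Finset.sum_filter_of_ne]
            intro B _ h
            exact fun hK => h (hω0 B hK)
        _ = (P.filter (fun B => B ∉ K)).card := by
            rw [Finset.sum_congr rfl (fun B hB => hω1 B (Finset.mem_filter.mp hB).2)]
            simp
        _ ≤ 1 := by exact_mod_cast hcard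
  have hnu : ∀ A : Finset (Fin m), nuOmega Set.univ ω A = ω A := by
    intro A
    apply le_antisymm
    · apply csSup_le
      · exact ⟨0, ∅, by simp⟩
      · rintro s ⟨P, -, hdisj, hsub, rfl⟩
        exact hbound A P hdisj hsub
    · apply le_csSup
      · exact ⟨ω A, by rintro s ⟨P, -, hdisj, hsub, rfl⟩; exact hbound A P hdisj hsub⟩
      · exact ⟨{A}, by simp⟩
  refine ⟨hnu, ?_, ?_⟩
  · rw [hnu, hω1 _ huniv]
  · ext A
    simp only [Set.mem_setOf_eq, hnu]
    constructor
    · intro hA; rw [hω0 A hA]; norm_num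
    · intro h
      by_contra hA
      rw [hω1 A hA] at h
      norm_num at h
end

section
/- Let V be the set of all 2-element subsets of [6] (the 15 edges of the complete graph K_6), and let L be the family of subsets S ⊆ V such that V ∖ S contains a triangle (three distinct vertices a, b, c with {a,b}, {a,c}, {b,c} ∈ V ∖ S). Then L is not linearly realizable; more precisely, there is no system of nonnegative weights x : V → [0,∞) with Σ_{e∈V} x(e) = 1 such that every subset S ⊆ V with Σ_{e∈S} x(e) < 1/2 belongs to L. -/
/-- `V`: the 15 edges of the complete graph `K_6`, i.e. all 2-element subsets of
`[6] = Fin 6`. -/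
def V6 : Finset (Finset (Fin 6)) := Finset.powersetCard 2 Finset.univ

/-- `L`: the family of edge sets `S ⊆ V` such that the complement `V ∖ S` contains
a triangle. -/
def L6 : Set (Finset (Finset (Fin 6))) :=
  {S | ∃ a b c : Fin 6, a ≠ b ∧ a ≠ c ∧ b ≠ c ∧
    ({a, b} : Finset (Fin 6)) ∈ V6 \ S ∧
    ({a, c} : Finset (Fin 6)) ∈ V6 \ S ∧
    ({b, c} : Finset (Fin 6)) ∈ V6 \ S}

/-- the 20 (ordered) 3–3 splits of the vertex set, given by a 3-element side. -/
def splits6 : Finset (Finset (Fin 6)) := Finset.univ.filter (fun A => A.card = 3)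

lemma splits6_card : splits6.card = 20 := by decide

lemma cross_count (e : Finset (Fin 6)) (he : e ∈ V6) :
    (splits6.filter (fun A => (e ∩ A).card = 1)).card = 12 := by
  revert he; revert e; decide

lemma no_cross_triangle (A : Finset (Fin 6)) (a b c : Fin 6)
    (hab : a ≠ b) (hac : a ≠ c) (hbc : b ≠ c)
    (h1 : (({a, b} : Finset (Fin 6)) ∩ A).card = 1)
    (h2 : (({a, c} : Finset (Fin 6)) ∩ A).card = 1)
    (h3 : (({b, c} : Finset (Fin 6)) ∩ A).card = 1) : False := by
  revert h1 h2 h3 hab hac hbc; revert A a b c; decide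

/-- `L` is not linearly realizable: there are no nonnegative weights
`x` on `V` with total weight `1` such that every `S ⊆ V` of weight `< 1/2` belongs
to `L`. -/
theorem stmt13 :
    ¬ ∃ x : Finset (Fin 6) → ℝ, (∀ e ∈ V6, 0 ≤ x e) ∧ (∑ e ∈ V6, x e) = 1 ∧
      ∀ S : Finset (Finset (Fin 6)), S ⊆ V6 → (∑ e ∈ S, x e) < 1 / 2 → S ∈ L6 := by
  rintro ⟨x, hx0, hx1, hL⟩
  -- total cut weight over all splits is 12
  have key : ∑ A ∈ splits6, ∑ e ∈ V6.filter (fun e => (e ∩ A).card = 1), x e = 12 := by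
    have : ∀ A ∈ splits6, ∑ e ∈ V6.filter (fun e => (e ∩ A).card = 1), x e
        = ∑ e ∈ V6, if (e ∩ A).card = 1 then x e else 0 := fun A _ => by
      rw [Finset.sum_filter]
    rw [Finset.sum_congr rfl this, Finset.sum_comm]
    have : ∀ e ∈ V6, (∑ A ∈ splits6, if (e ∩ A).card = 1 then x e else 0) = 12 * x e := by
      intro e he
      rw [← Finset.sum_filter, Finset.sum_const, cross_count e he]
      simp [mul_comm]
    rw [Finset.sum_congr rfl this, ← Finset.mul_sum, hx1, mul_one]
  -- so some split has cut weight > 1/2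
  have hex : ∃ A ∈ splits6, 1 / 2 < ∑ e ∈ V6.filter (fun e => (e ∩ A).card = 1), x e := by
    by_contra h
    push_neg at h
    have : (12 : ℝ) ≤ ∑ A ∈ splits6, (1/2 : ℝ) := key ▸ Finset.sum_le_sum h
    rw [Finset.sum_const, splits6_card] at this
    norm_num at this
  obtain ⟨A, -, hA⟩ := hex
  set T := V6.filter (fun e => (e ∩ A).card = 1) with hT
  have hTsub : T ⊆ V6 := Finset.filter_subset _ _
  have hsum : ∑ e ∈ V6 \ T, x e = 1 - ∑ e ∈ T, x e := by
    have := Finset.sum_sdiff (f := x) hTsub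
    linarith [this.symm ▸ hx1]
  have hS : ∑ e ∈ V6 \ T, x e < 1 / 2 := by rw [hsum]; linarith
  obtain ⟨a, b, c, hab, hac, hbc, h1, h2, h3⟩ :=
    hL (V6 \ T) (Finset.sdiff_subset) hS
  have hmem : ∀ e : Finset (Fin 6), e ∈ V6 \ (V6 \ T) → (e ∩ A).card = 1 := by
    intro e hemem
    rw [Finset.mem_sdiff, Finset.mem_sdiff] at hemem
    have heT : e ∈ T := by tauto
    exact (Finset.mem_filter.mp heT).2
  exact no_cross_triangle A a b c hab hac hbc (hmem _ h1) (hmem _ h2) (hmem _ h3)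
end
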